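/- For each j ∈ {1,2,3}, let μ_j = (1/2)(δ_{x_j} + δ_{y_j}) with x_j ≠ y_j in a compact metrizable space X, and let f_j ∈ C(X) satisfy: f_j(x_j) = −f_j(y_j) ∈ (1,2) for j = 1,2; and f₃(x₃) ∈ (1,2), f₃(y₃) ∈ (−2,−1), f₃(x₃) + f₃(y₃) > 0. Then Σ_{j=1}^3 μ_j(f_j) > 0, yet there do not exist closed sets A₁, A₂, A₃ ⊆ X with Σ_{j=1}^3 min_{x∈A_j} f_j(x) > 0 and Σ_{j=1}^3 μ_j(A_j) > 2. -/
import Mathlib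


open MeasureTheory
open scoped ENNReal

theorem no_closed_selection_k3 {X : Type*} [TopologicalSpace X] [CompactSpace X]
    [TopologicalSpace.MetrizableSpace X] [MeasurableSpace X] [BorelSpace X]
    (x y : Fin 3 → X) (hxy : ∀ j, x j ≠ y j) (f : Fin 3 → C(X, ℝ))
    (μ : Fin 3 → Measure X)
    (hμ : ∀ j, μ j = (2 : ℝ≥0∞)⁻¹ • Measure.dirac (x j) +
      (2 : ℝ≥0∞)⁻¹ • Measure.dirac (y j))
    (h12 : ∀ j : Fin 3, j ≠ 2 →
      f j (x j) = -f j (y j) ∧ f j (x j) ∈ Set.Ioo (1 : ℝ) 2)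
    (h3a : f 2 (x 2) ∈ Set.Ioo (1 : ℝ) 2) (h3b : f 2 (y 2) ∈ Set.Ioo (-2 : ℝ) (-1))
    (h3c : 0 < f 2 (x 2) + f 2 (y 2)) :
    (0 < ∑ j, ∫ z, f j z ∂(μ j)) ∧
    ¬ ∃ A : Fin 3 → Set X, (∀ j, IsClosed (A j) ∧ (A j).Nonempty) ∧
        (∃ t : Fin 3 → ℝ, (∀ j, ∀ z ∈ A j, t j ≤ f j z) ∧ 0 < ∑ j, t j) ∧
        2 < ∑ j, (μ j (A j)).toReal := by
  classical
  letI := TopologicalSpace.metrizableSpaceMetric X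
  -- basic bounds on the values of f
  have hfx : ∀ j, f j (x j) < 2 := by
    intro j
    by_cases hj : j = 2
    · subst hj; exact h3a.2
    · exact (h12 j hj).2.2
  have hfy : ∀ j, f j (y j) < -1 := by
    intro j
    by_cases hj : j = 2
    · subst hj; exact h3b.2
    · have := h12 j hj
      linarith [this.2.1, this.1]
  -- integrability
  have hint : ∀ j (a : X), Integrable (f j) (Measure.dirac a) := by
    intro j a
    refine ⟨(f j).continuous.aestronglyMeasurable, ?_⟩
    rw [HasFiniteIntegral]
    rw [lintegral_dirac]
    exact ENNReal.coe_lt_top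
  have hintegral : ∀ j, ∫ z, f j z ∂(μ j) = (f j (x j) + f j (y j)) / 2 := by
    intro j
    rw [hμ j, integral_add_measure
      ((hint j (x j)).smul_measure (by norm_num))
      ((hint j (y j)).smul_measure (by norm_num)),
      integral_smul_measure, integral_smul_measure, integral_dirac, integral_dirac]
    simp only [smul_eq_mul]
    rw [ENNReal.toReal_inv]
    norm_num
    ring
  constructor
  · rw [Fin.sum_univ_three, hintegral, hintegral, hintegral]
    have h0 := (h12 0 (by decide)).1
    have h1 := (h12 1 (by decide)).1
    linarith
  · rintro ⟨A, hA, ⟨t, ht, htsum⟩, hm⟩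
    -- measure of each A j
    have hmA : ∀ j, (μ j (A j)).toReal =
        (if x j ∈ A j then (1:ℝ)/2 else 0) + (if y j ∈ A j then (1:ℝ)/2 else 0) := by
      intro j
      rw [hμ j]
      rw [Measure.add_apply, Measure.smul_apply, Measure.smul_apply,
        Measure.dirac_apply' _ (hA j).1.measurableSet,
        Measure.dirac_apply' _ (hA j).1.measurableSet,
        Set.indicator_apply, Set.indicator_apply]
      split_ifs <;> simp <;> norm_num
      · rw [ENNReal.toReal_add (by norm_num) (by norm_num)]
        rw [ENNReal.toReal_inv]
        norm_num
      all_goals rw [ENNReal.toReal_inv]; norm_num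
    -- bounds and membership facts
    have hle : ∀ j, (μ j (A j)).toReal ≤ 1 := by
      intro j; rw [hmA j]; split_ifs <;> norm_num
    have hhalf : ∀ j, 1/2 < (μ j (A j)).toReal → t j < -1 := by
      intro j hj
      rw [hmA j] at hj
      have hyA : y j ∈ A j := by
        by_contra hy
        simp only [hy, if_false, add_zero] at hj
        split_ifs at hj <;> norm_num at hj
      exact lt_of_le_of_lt (ht j _ hyA) (hfy j)
    have hpos : ∀ j, 0 < (μ j (A j)).toReal → t j < 2 := by
      intro j hj
      rw [hmA j] at hj
      by_cases hx : x j ∈ A j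
      · exact lt_of_le_of_lt (ht j _ hx) (hfx j)
      · by_cases hy : y j ∈ A j
        · exact lt_of_le_of_lt (ht j _ hy) (lt_trans (hfy j) (by norm_num))
        · simp [hx, hy] at hj
    rw [Fin.sum_univ_three] at hm htsum
    have l0 := hle 0; have l1 := hle 1; have l2 := hle 2
    rcases le_or_gt (μ 0 (A 0)).toReal (1/2) with h0 | h0
    · have := hhalf 1 (by linarith)
      have := hhalf 2 (by linarith)
      have := hpos 0 (by linarith)
      linarith
    · rcases le_or_gt (μ 1 (A 1)).toReal (1/2) with h1 | h1
      · have := hhalf 0 h0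
        have := hhalf 2 (by linarith)
        have := hpos 1 (by linarith)
        linarith
      · have := hhalf 0 h0
        have := hhalf 1 h1
        have := hpos 2 (by linarith)
        linarith
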